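/- arXiv:1006.3305 — 3 statements merged into one kernel-verified Lean document; each statement's English description precedes it below -/
import Mathlib

section
/- Let n ≥ 1 and let Λ = M(ℤⁿ) ⊂ ℝⁿ be the image of ℤⁿ under an invertible linear map M : ℝⁿ → ℝⁿ. There exists a constant C = C(Λ) such that: for any functions g_1,…,g_n : (0,∞) → [0,∞), each integrable on (0,∞), and points t_1,…,t_n ∈ (0,∞) such that g_i is nondecreasing on (0, t_i] and nonincreasing on [t_i, ∞) for each i, one has ∑_{x ∈ Λ, x_i > 0 for all i} ∏_{i=1}^n g_i(x_i) ≤ C · ∏_{i=1}^n ( ∫_0^∞ g_i(t) dt + g_i(t_i) ). -/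
open MeasureTheory Set

lemma aux_pt {g : ℝ → ℝ} {t r x y : ℝ} (ht : 0 < t) (hr : 0 < r)
    (mono : MonotoneOn g (Set.Ioc 0 t)) (anti : AntitoneOn g (Set.Ici t))
    (hx : 0 < x) (hxy : |x - y| ≤ r) :
    g x ≤ g (max (y - r) (min (y + r) t)) := by
  have hxy1 : x - y ≤ r := (abs_le.1 hxy).2
  have hxy2 : -r ≤ x - y := (abs_le.1 hxy).1
  have h1 : x ≤ y + r := by linarith
  have h2 : y - r ≤ x := by linarith
  rcases le_or_gt x t with hxt | hxt
  · have hpt : max (y - r) (min (y + r) t) ≤ t :=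
      max_le (by linarith) (min_le_right _ _)
    have hxp : x ≤ max (y - r) (min (y + r) t) :=
      le_max_of_le_right (le_min h1 hxt)
    exact mono ⟨hx, hxt⟩ ⟨lt_of_lt_of_le hx hxp, hpt⟩ hxp
  · have htp : t ≤ max (y - r) (min (y + r) t) :=
      le_max_of_le_right (le_min (by linarith) le_rfl)
    have hpx : max (y - r) (min (y + r) t) ≤ x :=
      max_le h2 (le_trans (min_le_right _ _) hxt.le)
    exact anti htp (le_trans htp hpx) hpx

lemma aux_int {g : ℝ → ℝ} {t r : ℝ} (ht : 0 < t) (hr : 0 < r)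
    (hg0 : ∀ s ∈ Set.Ioi (0:ℝ), 0 ≤ g s) (hgi : IntegrableOn g (Set.Ioi 0)) :
    IntegrableOn (fun s => g (max (s - r) (min (s + r) t))) (Set.Ioi (-r)) ∧
    (∫ s in Set.Ioi (-r), g (max (s - r) (min (s + r) t))) ≤
      2 * (∫ s in Set.Ioi (0:ℝ), g s) + 2 * r * g t := by
  set G : ℝ → ℝ := fun s => g (max (s - r) (min (s + r) t)) with hG
  -- piece 1
  have e1 : Set.EqOn (fun s => g (s + r)) G (Set.Ioc (-r) (t - r)) := by
    intro s hs
    have h1 : s + r ≤ t := by linarith [hs.2]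
    have h2 : s - r ≤ s + r := by linarith
    simp only [hG, min_eq_left h1, max_eq_right h2]
  have hpre1 : (fun s : ℝ => s + r) ⁻¹' (Set.Ioc 0 t) = Set.Ioc (-r) (t - r) := by
    ext s
    simp only [Set.mem_preimage, Set.mem_Ioc]
    constructor <;> rintro ⟨u, v⟩ <;> constructor <;> linarith
  have mp1 : MeasurePreserving (fun s : ℝ => s + r) volume volume :=
    measurePreserving_add_right volume r
  have me1 : MeasurableEmbedding (fun s : ℝ => s + r) :=
    (MeasurableEquiv.addRight r).measurableEmbedding
  have int1 : IntegrableOn (fun s => g (s + r)) (Set.Ioc (-r) (t - r)) := by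
    have h0 : IntegrableOn g (Set.Ioc 0 t) := hgi.mono_set Set.Ioc_subset_Ioi_self
    have := (((mp1.restrict_preimage (s := Set.Ioc 0 t)
      measurableSet_Ioc).integrable_comp_emb me1).2 h0 : _)
    rwa [hpre1] at this
  have val1 : (∫ s in Set.Ioc (-r) (t - r), g (s + r)) = ∫ s in Set.Ioc 0 t, g s := by
    rw [← hpre1]
    exact mp1.setIntegral_preimage_emb me1 g _
  -- piece 2
  have e2 : Set.EqOn (fun _ : ℝ => g t) G (Set.Ioc (t - r) (t + r)) := by
    intro s hs
    have h1 : t ≤ s + r := by linarith [hs.1]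
    have h2 : s - r ≤ t := by linarith [hs.2]
    simp only [hG, min_eq_right h1, max_eq_right h2]
  have int2 : IntegrableOn (fun _ : ℝ => g t) (Set.Ioc (t - r) (t + r)) :=
    integrableOn_const measure_Ioc_lt_top.ne
  have val2 : (∫ _ in Set.Ioc (t - r) (t + r), g t) = 2 * r * g t := by
    rw [setIntegral_const, measureReal_def, Real.volume_Ioc, smul_eq_mul]
    rw [ENNReal.toReal_ofReal (by linarith)]
    ring
  -- piece 3
  have e3 : Set.EqOn (fun s => g (s + -r)) G (Set.Ioi (t + r)) := by
    intro s hs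
    have h1 : t ≤ s + r := by
      simp only [Set.mem_Ioi] at hs; linarith
    have h2 : t ≤ s + -r := by
      simp only [Set.mem_Ioi] at hs; linarith
    simp only [hG, min_eq_right h1, sub_eq_add_neg, max_eq_left h2]
  have hpre3 : (fun s : ℝ => s + -r) ⁻¹' (Set.Ioi t) = Set.Ioi (t + r) := by
    ext s
    simp only [Set.mem_preimage, Set.mem_Ioi]
    constructor <;> intro <;> linarith
  have mp3 : MeasurePreserving (fun s : ℝ => s + -r) volume volume :=
    measurePreserving_add_right volume (-r)
  have me3 : MeasurableEmbedding (fun s : ℝ => s + -r) :=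
    (MeasurableEquiv.addRight (-r)).measurableEmbedding
  have int3 : IntegrableOn (fun s => g (s + -r)) (Set.Ioi (t + r)) := by
    have h0 : IntegrableOn g (Set.Ioi t) := hgi.mono_set (Set.Ioi_subset_Ioi ht.le)
    have := (((mp3.restrict_preimage (s := Set.Ioi t)
      measurableSet_Ioi).integrable_comp_emb me3).2 h0 : _)
    rwa [hpre3] at this
  have val3 : (∫ s in Set.Ioi (t + r), g (s + -r)) = ∫ s in Set.Ioi t, g s := by
    rw [← hpre3]
    exact mp3.setIntegral_preimage_emb me3 g _
  -- assemble
  have hsplit : Set.Ioi (-r) = (Set.Ioc (-r) (t - r) ∪ Set.Ioc (t - r) (t + r)) ∪ Set.Ioi (t + r) := by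
    rw [Set.Ioc_union_Ioc_eq_Ioc (by linarith) (by linarith),
      Set.Ioc_union_Ioi_eq_Ioi (by linarith)]
  have iG1 : IntegrableOn G (Set.Ioc (-r) (t - r)) := int1.congr_fun e1 measurableSet_Ioc
  have iG2 : IntegrableOn G (Set.Ioc (t - r) (t + r)) := int2.congr_fun e2 measurableSet_Ioc
  have iG3 : IntegrableOn G (Set.Ioi (t + r)) := int3.congr_fun e3 measurableSet_Ioi
  have disj1 : Disjoint (Set.Ioc (-r) (t - r)) (Set.Ioc (t - r) (t + r)) :=
    Set.Ioc_disjoint_Ioc_of_le le_rfl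
  have disj2 : Disjoint (Set.Ioc (-r) (t - r) ∪ Set.Ioc (t - r) (t + r)) (Set.Ioi (t + r)) := by
    rw [Set.Ioc_union_Ioc_eq_Ioc (by linarith) (by linarith)]
    exact Set.disjoint_left.2 fun x hx hx' => absurd hx.2 (not_le.2 hx')
  constructor
  · rw [hsplit]; exact (iG1.union iG2).union iG3
  have hnn : (0 : ℝ → ℝ) ≤ᵐ[volume.restrict (Set.Ioi (0:ℝ))] g :=
    (ae_restrict_iff' measurableSet_Ioi).2 (ae_of_all _ (fun s hs => by simpa using hg0 s hs))
  have b1 : (∫ s in Set.Ioc (-r) (t - r), G s) ≤ ∫ s in Set.Ioi (0:ℝ), g s := by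
    rw [← setIntegral_congr_fun measurableSet_Ioc e1, val1]
    exact setIntegral_mono_set hgi hnn Set.Ioc_subset_Ioi_self.eventuallyLE
  have b2 : (∫ s in Set.Ioc (t - r) (t + r), G s) = 2 * r * g t := by
    rw [← setIntegral_congr_fun measurableSet_Ioc e2, val2]
  have b3 : (∫ s in Set.Ioi (t + r), G s) ≤ ∫ s in Set.Ioi (0:ℝ), g s := by
    rw [← setIntegral_congr_fun measurableSet_Ioi e3, val3]
    exact setIntegral_mono_set hgi hnn (Set.Ioi_subset_Ioi ht.le).eventuallyLE
  rw [hsplit, setIntegral_union disj2 measurableSet_Ioi (iG1.union iG2) iG3,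
    setIntegral_union disj1 measurableSet_Ioc iG1 iG2]
  linarith


theorem lattice_sum_le_integrals (n : ℕ) (hn : 0 < n)
    (M : (Fin n → ℝ) ≃ₗ[ℝ] (Fin n → ℝ)) :
    ∃ C : ℝ, 0 < C ∧
      ∀ (g : Fin n → ℝ → ℝ) (t : Fin n → ℝ),
        (∀ i, 0 < t i) →
        (∀ i, ∀ s ∈ Set.Ioi (0 : ℝ), 0 ≤ g i s) →
        (∀ i, MeasureTheory.IntegrableOn (g i) (Set.Ioi 0)) →
        (∀ i, MonotoneOn (g i) (Set.Ioc 0 (t i))) →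
        (∀ i, AntitoneOn (g i) (Set.Ici (t i))) →
        Summable (fun m : {m : Fin n → ℤ // ∀ i, 0 < M (fun j => (m j : ℝ)) i} =>
            ∏ i, g i (M (fun j => (m.1 j : ℝ)) i)) ∧
        (∑' m : {m : Fin n → ℤ // ∀ i, 0 < M (fun j => (m j : ℝ)) i},
            ∏ i, g i (M (fun j => (m.1 j : ℝ)) i))
          ≤ C * ∏ i, ((∫ s in Set.Ioi (0 : ℝ), g i s) + g i (t i)) := by
  classical
  set E := M.toContinuousLinearEquiv with hE
  have hEM : (E : (Fin n → ℝ) → (Fin n → ℝ)) = M := M.coe_toContinuousLinearEquiv'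
  set K : ℝ := ‖((E : (Fin n → ℝ) →L[ℝ] (Fin n → ℝ)))‖ with hK
  have hK0 : 0 ≤ K := norm_nonneg _
  set r : ℝ := K + 1 with hrdef
  have hr : 0 < r := by linarith
  have hr1 : 1 ≤ r := by linarith
  set D : ℝ := |LinearMap.det (M : (Fin n → ℝ) →ₗ[ℝ] (Fin n → ℝ))| with hD
  have hD0 : 0 < D := abs_pos.2 (LinearEquiv.isUnit_det' M).ne_zero
  refine ⟨(2 * r) ^ n / D, by positivity, ?_⟩
  intro g t ht hg0 hgi hmono hanti
  -- one-dimensional majorants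
  set G : Fin n → ℝ → ℝ := fun i =>
    (Set.Ioi (-r)).indicator (fun s => g i (max (s - r) (min (s + r) (t i)))) with hGdef
  have hGint : ∀ i, Integrable (G i) := fun i =>
    (integrable_indicator_iff measurableSet_Ioi).2 (aux_int (ht i) hr (hg0 i) (hgi i)).1
  have hGnn : ∀ i s, 0 ≤ G i s := by
    intro i s
    by_cases h : s ∈ Set.Ioi (-r)
    · rw [hGdef]; simp only []
      rw [Set.indicator_of_mem h]
      apply hg0 i
      have h1 : 0 < s + r := by simp only [Set.mem_Ioi] at h; linarith
      have h2 : 0 < min (s + r) (t i) := lt_min h1 (ht i)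
      exact lt_of_lt_of_le h2 (le_max_right _ _)
    · rw [hGdef]; simp only []
      rw [Set.indicator_of_notMem h]
  have hGval : ∀ i, (∫ s, G i s) ≤ 2 * (∫ s in Set.Ioi (0:ℝ), g i s) + 2 * r * g i (t i) := by
    intro i
    rw [hGdef]; simp only []
    rw [integral_indicator measurableSet_Ioi]
    exact (aux_int (ht i) hr (hg0 i) (hgi i)).2
  -- the product majorant
  set H : (Fin n → ℝ) → ℝ := fun y => ∏ i, G i (y i) with hH
  have hHint : Integrable H := Integrable.fintype_prod (fun i => hGint i)
  have hHnn : ∀ y, 0 ≤ H y := fun y => Finset.prod_nonneg fun i _ => hGnn i (y i)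
  -- the boxes
  set B0 : Set (Fin n → ℝ) := Set.univ.pi (fun _ => Set.Ioo (0:ℝ) 1) with hB0
  have hB0open : IsOpen B0 := isOpen_set_pi Set.finite_univ (fun i _ => isOpen_Ioo)
  have hB0vol : volume B0 = 1 := by
    rw [hB0, volume_pi_pi]
    simp [Real.volume_Ioo]
  set em : (Fin n → ℤ) → (Fin n → ℝ) := fun m j => (m j : ℝ) with hem
  set T : (Fin n → ℤ) → Set (Fin n → ℝ) := fun m => (fun c => M (em m + c)) '' B0 with hT
  have hTopen : ∀ m, IsOpen (T m) := by
    intro m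
    have h1 : T m = ((Homeomorph.addLeft (em m)).trans E.toHomeomorph) '' B0 := by
      rw [hT]
      congr 1
    rw [h1]
    exact ((Homeomorph.addLeft (em m)).trans E.toHomeomorph).isOpen_image.2 hB0open
  have hTmeas : ∀ m, MeasurableSet (T m) := fun m => (hTopen m).measurableSet
  have hTvol : ∀ m, volume (T m) = ENNReal.ofReal D := by
    intro m
    have h1 : T m = (M : (Fin n → ℝ) →ₗ[ℝ] (Fin n → ℝ)) '' ((fun c => em m + c) '' B0) := by
      rw [hT, Set.image_image]
      rfl
    rw [h1, Measure.addHaar_image_linearMap]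
    have h2 : (fun c => em m + c) '' B0 = (fun c => -(em m) + c) ⁻¹' B0 := by
      ext y
      constructor
      · rintro ⟨c, hc, rfl⟩
        simpa using hc
      · intro hy
        exact ⟨-(em m) + y, hy, add_neg_cancel_left _ _⟩
    rw [h2, measure_preimage_add, hB0vol, mul_one, hD]
  have hTvolR : ∀ m, (volume (T m)).toReal = D := by
    intro m; rw [hTvol m, ENNReal.toReal_ofReal hD0.le]
  have hTfin : ∀ m, volume (T m) < ⊤ := by
    intro m; rw [hTvol m]; exact ENNReal.ofReal_lt_top
  -- pointwise key bound
  have hMcnorm : ∀ c : Fin n → ℝ, c ∈ B0 → ∀ i, |(M : (Fin n → ℝ) → (Fin n → ℝ)) c i| ≤ K := by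
    intro c hc i
    have hnc : ‖c‖ ≤ 1 := by
      rw [pi_norm_le_iff_of_nonneg zero_le_one]
      intro j
      have := hc j (Set.mem_univ j)
      rw [Real.norm_eq_abs, abs_le]
      constructor <;> [linarith [this.1]; linarith [this.2]]
    have h1 : ‖(E : (Fin n → ℝ) →L[ℝ] (Fin n → ℝ)) c‖ ≤ K * ‖c‖ :=
      ContinuousLinearMap.le_opNorm _ c
    have h2 : ((E : (Fin n → ℝ) →L[ℝ] (Fin n → ℝ)) c) = M c := by
      rw [← hEM]; rfl
    calc |(M : (Fin n → ℝ) → (Fin n → ℝ)) c i| = ‖(M : (Fin n → ℝ) → (Fin n → ℝ)) c i‖ := rfl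
      _ ≤ ‖(M : (Fin n → ℝ) → (Fin n → ℝ)) c‖ := norm_le_pi_norm _ i
      _ = ‖(E : (Fin n → ℝ) →L[ℝ] (Fin n → ℝ)) c‖ := by rw [h2]
      _ ≤ K * ‖c‖ := h1
      _ ≤ K * 1 := by nlinarith
      _ = K := mul_one K
  have key : ∀ (m : Fin n → ℤ), (∀ i, 0 < M (em m) i) → ∀ y ∈ T m,
      (∏ i, g i (M (em m) i)) ≤ H y := by
    rintro m hm y ⟨c, hc, rfl⟩
    apply Finset.prod_le_prod
    · intro i _
      exact hg0 i _ (hm i)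
    · intro i _
      have hadd : M (em m + c) i = M (em m) i + M c i := by
        rw [map_add]; rfl
      have hci := hMcnorm c hc i
      have habs : |M (em m) i - M (em m + c) i| ≤ r := by
        rw [hadd]
        have : M (em m) i - (M (em m) i + M c i) = -(M c i) := by ring
        rw [this, abs_neg]
        linarith
      have hyi : M (em m + c) i ∈ Set.Ioi (-r) := by
        rw [Set.mem_Ioi, hadd]
        have h1 : -K ≤ M c i := by
          have := abs_le.1 hci
          linarith [this.1]
        have h2 : 0 < M (em m) i := hm i
        rw [hrdef]
        linarith
      calc g i (M (em m) i)
          ≤ g i (max ((M (em m + c) i) - r) (min ((M (em m + c) i) + r) (t i))) :=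
            aux_pt (ht i) hr (hmono i) (hanti i) (hm i) habs
        _ = G i (M (em m + c) i) := by
            rw [hGdef]; simp only []
            rw [Set.indicator_of_mem hyi]
  -- disjointness
  have hdisj : ∀ m m' : Fin n → ℤ, m ≠ m' → Disjoint (T m) (T m') := by
    intro m m' hne
    rw [Set.disjoint_left]
    rintro y ⟨c, hc, hyc⟩ ⟨c', hc', hyc'⟩
    apply hne
    have heq : em m + c = em m' + c' := M.injective (hyc.trans hyc'.symm)
    funext j
    have h1 := congrFun heq j
    have hcj := hc j (Set.mem_univ j)
    have hcj' := hc' j (Set.mem_univ j)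
    simp only [Pi.add_apply, hem] at h1
    have h2 : |((m j - m' j : ℤ) : ℝ)| < 1 := by
      push_cast
      rw [abs_lt]
      constructor <;> [nlinarith [hcj.1, hcj.2, hcj'.1, hcj'.2]; nlinarith [hcj.1, hcj.2, hcj'.1, hcj'.2]]
    have h3 : |m j - m' j| < 1 := by
      exact_mod_cast (by rwa [← Int.cast_abs] at h2 : ((|m j - m' j| : ℤ) : ℝ) < 1)
    have h4 := abs_lt.1 h3
    omega
  -- per point integral bound
  have hpt : ∀ (m : Fin n → ℤ), (∀ i, 0 < M (em m) i) →
      D * (∏ i, g i (M (em m) i)) ≤ ∫ y in T m, H y := by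
    intro m hm
    have h1 : (∫ _ in T m, (∏ i, g i (M (em m) i))) = D * (∏ i, g i (M (em m) i)) := by
      rw [setIntegral_const, measureReal_def, hTvolR m, smul_eq_mul]
    rw [← h1]
    exact setIntegral_mono_on (integrableOn_const (hTfin m).ne)
      hHint.integrableOn (hTmeas m) (key m hm)
  -- finite sums are bounded
  set a : {m : Fin n → ℤ // ∀ i, 0 < M (fun j => (m j : ℝ)) i} → ℝ :=
    fun m => ∏ i, g i (M (fun j => (m.1 j : ℝ)) i) with ha
  have hann : ∀ m, 0 ≤ a m := by
    intro m
    exact Finset.prod_nonneg fun i _ => hg0 i _ (m.2 i)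
  set B : ℝ := ∫ y, H y with hB
  have hSB : ∀ S : Finset {m : Fin n → ℤ // ∀ i, 0 < M (fun j => (m j : ℝ)) i},
      (∑ m ∈ S, a m) ≤ B / D := by
    intro S
    rw [le_div_iff₀ hD0]
    have h1 : (∑ m ∈ S, a m) * D = ∑ m ∈ S, D * a m := by
      rw [Finset.sum_mul]
      exact Finset.sum_congr rfl fun m _ => mul_comm _ _
    rw [h1]
    have h2 : (∑ m ∈ S, D * a m) ≤ ∑ m ∈ S, ∫ y in T m.1, H y := by
      apply Finset.sum_le_sum
      intro m _
      exact hpt m.1 m.2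
    have h3 : (∑ m ∈ S, ∫ y in T m.1, H y) = ∫ y in ⋃ m ∈ S, T m.1, H y := by
      rw [integral_biUnion_finset S (fun m _ => hTmeas m.1)
        (fun m _ m' _ hne => hdisj m.1 m'.1 (fun hc => hne (Subtype.coe_injective hc)))
        (fun m _ => hHint.integrableOn)]
    have h4 : (∫ y in ⋃ m ∈ S, T m.1, H y) ≤ B :=
      setIntegral_le_integral hHint (ae_of_all _ fun y => hHnn y)
    linarith
  have hsum : Summable a := summable_of_sum_le (fun m => hann m) hSB
  refine ⟨hsum, ?_⟩
  have htsum : (∑' m, a m) ≤ B / D := hsum.tsum_le_of_sum_le hSB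
  -- final computation
  have hInn : ∀ i, 0 ≤ ∫ s in Set.Ioi (0:ℝ), g i s := by
    intro i
    apply setIntegral_nonneg measurableSet_Ioi
    exact fun s hs => hg0 i s hs
  have hBval : B = ∏ i, ∫ s, G i s := by
    rw [hB, hH]
    exact integral_fintype_prod_eq_prod G
  have hfinal : B ≤ (2 * r) ^ n * ∏ i, ((∫ s in Set.Ioi (0:ℝ), g i s) + g i (t i)) := by
    rw [hBval]
    calc (∏ i, ∫ s, G i s)
        ≤ ∏ i, (2 * r * ((∫ s in Set.Ioi (0:ℝ), g i s) + g i (t i))) := by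
          apply Finset.prod_le_prod
          · intro i _
            exact integral_nonneg fun s => hGnn i s
          · intro i _
            have h1 := hGval i
            have h2 := hInn i
            have h3 : 0 ≤ g i (t i) := hg0 i (t i) (ht i)
            nlinarith
      _ = (2 * r) ^ n * ∏ i, ((∫ s in Set.Ioi (0:ℝ), g i s) + g i (t i)) := by
          rw [Finset.prod_mul_distrib, Finset.prod_const, Finset.card_univ, Fintype.card_fin]
  calc (∑' m, a m) ≤ B / D := htsum
    _ ≤ ((2 * r) ^ n * ∏ i, ((∫ s in Set.Ioi (0:ℝ), g i s) + g i (t i))) / D := by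
        gcongr
    _ = (2 * r) ^ n / D * ∏ i, ((∫ s in Set.Ioi (0:ℝ), g i s) + g i (t i)) := by
        ring
end

section
/- For all reals 0 < a ≤ b there exists a constant C = C(a, b) such that for every integer k ≥ 3 and every s ∈ ℂ with a ≤ Re(s) ≤ b, one has | Γ(s + k − 1)/Γ(k − 1) − (k − 1)^s | ≤ C · (|s| + 1)² · (k − 1)^{Re(s)} / k, where Γ is the complex Gamma function and (k − 1)^s = exp(s · log(k − 1)). -/
open Filter Topology Finset Nat MeasureTheory


lemma L1_abs_Gamma_le {s : ℂ} (hs : 0 < s.re) :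
    ‖Complex.Gamma s‖ ≤ Real.Gamma s.re := by
  rw [Complex.Gamma_eq_integral hs, Real.Gamma_eq_integral hs, Complex.GammaIntegral]
  calc ‖∫ x in Set.Ioi (0:ℝ), ↑(Real.exp (-x)) * (x:ℂ) ^ (s - 1)‖
      ≤ ∫ x in Set.Ioi (0:ℝ), ‖(↑(Real.exp (-x)) * (x:ℂ) ^ (s - 1))‖ := by
        exact norm_integral_le_integral_norm _
    _ = ∫ x in Set.Ioi (0:ℝ), Real.exp (-x) * x ^ (s.re - 1) := by
        refine setIntegral_congr_fun measurableSet_Ioi fun x hx => ?_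
        rw [norm_mul, Complex.norm_real, Real.norm_eq_abs,
          abs_of_nonneg (Real.exp_pos _).le,
          Complex.norm_cpow_eq_rpow_re_of_pos hx]
        simp

lemma L2_real_Gamma_shift (y : ℝ) (hy : 0 < y) (m : ℕ) :
    Real.Gamma (y + m) = Real.Gamma y * ∏ i ∈ range m, (y + i) := by
  induction m with
  | zero => simp
  | succ m ih =>
    have h : y + (m + 1 : ℕ) = (y + m) + 1 := by push_cast; ring
    rw [h, Real.Gamma_add_one (by positivity), ih, prod_range_succ]
    ring

lemma L3_complex_Gamma_shift (s : ℂ) (hs : 0 < s.re) (n : ℕ) :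
    Complex.Gamma (s + n) = Complex.Gamma s * ∏ j ∈ range n, (s + j) := by
  induction n with
  | zero => simp
  | succ n ih =>
    have hne : s + (n : ℂ) ≠ 0 := by
      intro h
      have : (s + (n : ℂ)).re = 0 := by rw [h]; simp
      simp only [Complex.add_re, Complex.natCast_re] at this
      have : (0:ℝ) ≤ (n:ℝ) := Nat.cast_nonneg n
      linarith [hs, ‹(s + (n:ℂ)).re = 0›]
    have h : s + ((n + 1 : ℕ) : ℂ) = (s + n) + 1 := by push_cast; ring
    rw [h, Complex.Gamma_add_one _ hne, ih, prod_range_succ]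
    ring

lemma L4_crude (b : ℝ) (hb : 0 < b) :
    ∃ M : ℝ, 1 ≤ M ∧ ∀ (n : ℕ) (x : ℝ), 2 ≤ n → 0 < x → x ≤ b →
      Real.Gamma (x + n) ≤ M * (Real.Gamma n * (n : ℝ) ^ x) := by
  set m : ℕ := ⌊b⌋₊ + 1 with hm
  have hmb : b < m := by rw [hm]; push_cast; exact Nat.lt_floor_add_one b
  have hm1 : (1:ℝ) ≤ m := by exact_mod_cast Nat.one_le_iff_ne_zero.2 (by simp [hm])
  refine ⟨(1 + m / 2) ^ b, ?_, ?_⟩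
  · apply Real.one_le_rpow (by linarith) hb.le
  intro n x hn hx hxb
  have hn0 : (0:ℝ) < n := by positivity
  have hn2 : (2:ℝ) ≤ n := by exact_mod_cast hn
  have hm0 : (0:ℝ) < m := by linarith
  set t : ℝ := x / m with ht
  have ht0 : 0 < t := by positivity
  have ht1 : t < 1 := by rw [ht, div_lt_one hm0]; linarith
  have key := Real.Gamma_mul_add_mul_le_rpow_Gamma_mul_rpow_Gamma
    (s := (n:ℝ)) (t := (n:ℝ) + m) hn0 (by positivity) (by linarith : (0:ℝ) < 1 - t) ht0
    (by ring)
  have harg : (1 - t) * (n:ℝ) + t * ((n:ℝ) + m) = x + n := by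
    rw [ht]; field_simp; ring
  rw [harg] at key
  have hGn : 0 < Real.Gamma (n:ℝ) := Real.Gamma_pos_of_pos hn0
  have hshift : Real.Gamma ((n:ℝ) + m) = Real.Gamma n * ∏ i ∈ range m, ((n:ℝ) + i) :=
    L2_real_Gamma_shift _ hn0 m
  have hprod : ∏ i ∈ range m, ((n:ℝ) + i) ≤ ((n:ℝ) + m) ^ (m:ℕ) := by
    calc ∏ i ∈ range m, ((n:ℝ) + i) ≤ ∏ i ∈ range m, ((n:ℝ) + m) := by
          apply Finset.prod_le_prod
          · intro i _; positivity
          · intro i hi; have := Finset.mem_range.1 hi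
            have : (i:ℝ) ≤ m := by exact_mod_cast this.le
            linarith
      _ = ((n:ℝ) + m) ^ (m:ℕ) := by rw [prod_const, card_range]
  have h2 : Real.Gamma (x + n) ≤ Real.Gamma n * ((n:ℝ) + m) ^ x := by
    calc Real.Gamma (x + n) ≤ Real.Gamma n ^ (1 - t) * Real.Gamma ((n:ℝ) + m) ^ t := key
      _ = Real.Gamma n ^ (1 - t) * (Real.Gamma n ^ t * (∏ i ∈ range m, ((n:ℝ) + i)) ^ t) := by
          rw [hshift, Real.mul_rpow hGn.le (Finset.prod_nonneg fun i _ => by positivity)]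
      _ = Real.Gamma n * (∏ i ∈ range m, ((n:ℝ) + i)) ^ t := by
          rw [← mul_assoc, ← Real.rpow_add hGn]; norm_num
      _ ≤ Real.Gamma n * (((n:ℝ) + m) ^ (m:ℕ)) ^ t := by
          apply mul_le_mul_of_nonneg_left _ hGn.le
          exact Real.rpow_le_rpow (Finset.prod_nonneg fun i _ => by positivity) hprod ht0.le
      _ = Real.Gamma n * ((n:ℝ) + m) ^ x := by
          rw [← Real.rpow_natCast ((n:ℝ) + m) m, ← Real.rpow_mul (by positivity)]
          congr 2
          rw [ht]; field_simp
  calc Real.Gamma (x + n) ≤ Real.Gamma n * ((n:ℝ) + m) ^ x := h2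
    _ = Real.Gamma n * ((n:ℝ) ^ x * (1 + m / n) ^ x) := by
        rw [← Real.mul_rpow hn0.le (by positivity)]
        congr 2
        field_simp
    _ ≤ (1 + m / 2) ^ b * (Real.Gamma n * (n:ℝ) ^ x) := by
        have h3 : (1 + (m:ℝ) / n) ^ x ≤ (1 + (m:ℝ) / 2) ^ b := by
          calc (1 + (m:ℝ) / n) ^ x ≤ (1 + (m:ℝ) / 2) ^ x := by
                apply Real.rpow_le_rpow (by positivity) _ hx.le
                have : (m:ℝ) / n ≤ m / 2 := by
                  apply div_le_div_of_nonneg_left (by positivity) (by norm_num) hn2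
                linarith
            _ ≤ (1 + (m:ℝ) / 2) ^ b := by
                apply Real.rpow_le_rpow_of_exponent_le (by linarith) hxb
        have hpos : (0:ℝ) ≤ Real.Gamma n * (n:ℝ) ^ x := by positivity
        nlinarith [Real.rpow_nonneg (by positivity : (0:ℝ) ≤ 1 + (m:ℝ)/n) x, hGn,
          Real.rpow_nonneg hn0.le x]


noncomputable def Gq (s : ℂ) (n : ℕ) : ℂ :=
  Complex.Gamma (s + n) / (Complex.Gamma n * Complex.exp (s * Real.log n))

noncomputable def rr (s : ℂ) (j : ℕ) : ℂ :=
  (1 + s / j) * Complex.exp (-(s * (((Real.log ((j:ℝ)+1) - Real.log j : ℝ)) : ℂ)))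

lemma Lcast_Gamma_nat (n : ℕ) : Complex.Gamma ((n:ℂ)) = (Real.Gamma n : ℂ) := by
  rw [← Complex.ofReal_natCast, Complex.Gamma_ofReal]

lemma Lcpow_nat (n : ℕ) (hn : 1 ≤ n) (s : ℂ) :
    (n : ℂ) ^ s = Complex.exp (s * Real.log n) := by
  have hne : (n:ℂ) ≠ 0 := Nat.cast_ne_zero.2 (by omega)
  rw [Complex.cpow_def_of_ne_zero hne, ← Complex.ofReal_natCast,
    ← Complex.ofReal_log (by positivity), mul_comm]


lemma L5_tendsto (s : ℂ) (hs : 0 < s.re) :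
    Tendsto (fun n : ℕ => Gq s n) atTop (𝓝 1) := by
  have hGs : Complex.Gamma s ≠ 0 := by
    apply Complex.Gamma_ne_zero
    intro m h
    rw [h] at hs
    simp only [Complex.neg_re, Complex.natCast_re] at hs
    have : (0:ℝ) ≤ (m:ℝ) := Nat.cast_nonneg m
    linarith
  have h1 : Tendsto (fun n : ℕ => Complex.Gamma s / Complex.GammaSeq s n) atTop (𝓝 1) := by
    have := (tendsto_const_nhds (x := Complex.Gamma s)).div
      (Complex.GammaSeq_tendsto_Gamma s) hGs
    rwa [div_self hGs] at this
  have h2 : Tendsto (fun n : ℕ => (n:ℂ) / (s + n)) atTop (𝓝 1) := by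
    have hinv : Tendsto (fun n : ℕ => ((n:ℝ)⁻¹ : ℂ)) atTop (𝓝 0) := by
      have : Tendsto (fun n : ℕ => (n:ℝ)⁻¹) atTop (𝓝 0) := tendsto_inv_atTop_nhds_zero_nat
      have := (Complex.continuous_ofReal.tendsto 0).comp this
      simpa [Function.comp_def] using this
    have h3 : Tendsto (fun n : ℕ => (s + n) / (n:ℂ)) atTop (𝓝 1) := by
      have : Tendsto (fun n : ℕ => 1 + s * ((n:ℝ)⁻¹ : ℂ)) atTop (𝓝 1) := by
        have := (hinv.const_mul s).const_add 1
        simpa [Function.comp_def] using this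
      apply this.congr'
      filter_upwards [eventually_ge_atTop 1] with n hn
      have hne : (n:ℂ) ≠ 0 := Nat.cast_ne_zero.2 (by omega)
      push_cast
      field_simp
      ring
    have := (h3.inv₀ one_ne_zero)
    rw [inv_one] at this
    apply this.congr'
    filter_upwards [eventually_ge_atTop 1] with n hn
    have hne : (n:ℂ) ≠ 0 := Nat.cast_ne_zero.2 (by omega)
    have hne2 : s + (n:ℂ) ≠ 0 := by
      intro h
      have : (s + (n:ℂ)).re = 0 := by rw [h]; simp
      simp only [Complex.add_re, Complex.natCast_re] at this
      have h4 : (0:ℝ) ≤ (n:ℝ) := Nat.cast_nonneg n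
      linarith
    rw [inv_div]
  have := h1.mul h2
  rw [mul_one] at this
  apply this.congr'
  filter_upwards [eventually_ge_atTop 1] with n hn
  obtain ⟨m, rfl⟩ : ∃ m, n = m + 1 := ⟨n - 1, by omega⟩
  have hne : ((m+1 : ℕ):ℂ) ≠ 0 := Nat.cast_ne_zero.2 (by omega)
  have hGamn : Complex.Gamma ((m+1:ℕ):ℂ) = (m ! : ℂ) := by
    exact_mod_cast Complex.Gamma_nat_eq_factorial m
  have hfacne : ((m ! : ℕ) : ℂ) ≠ 0 := Nat.cast_ne_zero.2 (Nat.factorial_ne_zero m)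
  have hsn : ∀ j : ℕ, s + (j:ℂ) ≠ 0 := by
    intro j h
    have : (s + (j:ℂ)).re = 0 := by rw [h]; simp
    simp only [Complex.add_re, Complex.natCast_re] at this
    have h4 : (0:ℝ) ≤ (j:ℝ) := Nat.cast_nonneg j
    linarith
  have hprodne : ∀ N : ℕ, (∏ j ∈ range N, (s + j)) ≠ 0 := fun N =>
    Finset.prod_ne_zero_iff.2 fun j _ => hsn j
  have hexpne : Complex.exp (s * Real.log (m+1:ℕ)) ≠ 0 := Complex.exp_ne_zero _
  rw [Gq, Complex.GammaSeq, L3_complex_Gamma_shift s hs, hGamn,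
    ← Lcpow_nat (m+1) (by omega) s]
  rw [Finset.prod_range_succ]
  have hfact : ((m+1)! : ℂ) = ((m+1:ℕ):ℂ) * (m ! : ℂ) := by
    push_cast [Nat.factorial_succ]; ring
  have hcpne : ((m+1:ℕ):ℂ) ^ s ≠ 0 := by
    rw [Lcpow_nat (m+1) (by omega) s]; exact Complex.exp_ne_zero _
  rw [hfact]
  field_simp
  have h5 : s + ((m:ℂ) + 1) ≠ 0 := by have := hsn (m + 1); push_cast at this; exact this
  have h6 : ((m:ℂ) + 1) ≠ 0 := by push_cast at hne; exact hne
  have h7 : ((m:ℂ) + 1) ^ s ≠ 0 := by push_cast at hcpne; exact hcpne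
  exact mul_div_cancel_right₀ _ (hsn (m+1))



lemma L6_rr_bound (s : ℂ) (j : ℕ) (hj : 2 ≤ j) (hsj : ‖s‖ ≤ j) :
    ‖rr s j - 1‖ ≤ 3 * (‖s‖ + 1) ^ 2 / j ^ 2 := by
  have hj0 : (0:ℝ) < j := by positivity
  have hj1 : (0:ℝ) < (j:ℝ) + 1 := by positivity
  set L : ℝ := Real.log ((j:ℝ)+1) - Real.log j with hL
  have hLlog : L = Real.log (((j:ℝ)+1)/j) := by
    rw [hL, Real.log_div (by positivity) (by positivity)]
  have hLub : L ≤ 1 / j := by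
    rw [hLlog]
    have := Real.log_le_sub_one_of_pos (show (0:ℝ) < ((j:ℝ)+1)/j by positivity)
    have h2 : ((j:ℝ)+1)/j - 1 = 1/j := by field_simp; ring
    linarith
  have hLlb : 1 / ((j:ℝ)+1) ≤ L := by
    have h1 := Real.log_le_sub_one_of_pos (show (0:ℝ) < (j:ℝ)/((j:ℝ)+1) by positivity)
    have h2 : Real.log ((j:ℝ)/((j:ℝ)+1)) = - L := by
      rw [hLlog, ← Real.log_inv]
      congr 1
      field_simp
    have h3 : (j:ℝ)/((j:ℝ)+1) - 1 = -(1/((j:ℝ)+1)) := by field_simp; ring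
    rw [h2, h3] at h1
    linarith
  have hL0 : 0 ≤ L := le_trans (by positivity) hLlb
  have hgap : 1/(j:ℝ) - L ≤ 1 / j^2 := by
    have hstep : 1/(j:ℝ) - 1/((j:ℝ)+1) = 1/((j:ℝ)*((j:ℝ)+1)) := by
      field_simp; ring
    have h4 : 1/((j:ℝ)*((j:ℝ)+1)) ≤ 1/(j:ℝ)^2 := by
      apply div_le_div_of_nonneg_left one_pos.le (by positivity)
      nlinarith
    linarith
  set z : ℂ := -(s * (L:ℝ)) with hz
  have habsz : ‖z‖ = ‖s‖ * L := by
    rw [hz, norm_neg, norm_mul, Complex.norm_real, Real.norm_eq_abs, abs_of_nonneg hL0]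
  have hz1 : ‖z‖ ≤ 1 := by
    rw [habsz]
    calc ‖s‖ * L ≤ (j:ℝ) * (1/j) := by
          apply mul_le_mul hsj hLub hL0 hj0.le
      _ = 1 := by field_simp
  set E : ℂ := Complex.exp z - 1 - z with hE
  have hEbound : ‖E‖ ≤ ‖s‖ ^ 2 / j ^ 2 := by
    calc ‖E‖ ≤ ‖z‖ ^ 2 := Complex.norm_exp_sub_one_sub_id_le hz1
      _ = (‖s‖) ^ 2 * L ^ 2 := by rw [habsz]; ring
      _ ≤ (‖s‖) ^ 2 * (1/j)^2 := by
          apply mul_le_mul_of_nonneg_left _ (by positivity)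
          apply pow_le_pow_left₀ hL0 hLub
      _ = ‖s‖ ^ 2 / j ^ 2 := by
          rw [div_pow]
          ring
  have hcast : ((((1:ℝ)/(j:ℝ) - L) : ℝ) : ℂ) = 1/(j:ℂ) - (L:ℂ) := by push_cast; ring
  have hkey : rr s j - 1 = s * ((((1:ℝ)/(j:ℝ) - L) : ℝ) : ℂ) + (s/j) * z + (1 + s/j) * E := by
    rw [rr, hE, hz, ← hL, hcast]
    have hjne : (j:ℂ) ≠ 0 := Nat.cast_ne_zero.2 (by omega)
    field_simp
    ring
  have habsj : ‖(j:ℂ)‖ = (j:ℝ) := by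
    rw [← Complex.ofReal_natCast, Complex.norm_real, Real.norm_eq_abs, abs_of_nonneg hj0.le]
  have h1 : ‖s * ((((1:ℝ)/(j:ℝ) - L) : ℝ) : ℂ)‖ ≤ ‖s‖ / j^2 := by
    rw [norm_mul, Complex.norm_real, Real.norm_eq_abs, abs_of_nonneg (by linarith [hLub] : (0:ℝ) ≤ 1/(j:ℝ) - L)]
    calc ‖s‖ * (1/(j:ℝ) - L) ≤ ‖s‖ * (1/(j:ℝ)^2) :=
          mul_le_mul_of_nonneg_left hgap (norm_nonneg s)
      _ = ‖s‖ / j^2 := by ring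
  have h2 : ‖(s/j) * z‖ ≤ ‖s‖ ^2 / j^2 := by
    rw [norm_mul, norm_div, habsz, habsj]
    calc ‖s‖ / j * (‖s‖ * L)
        ≤ ‖s‖ / j * (‖s‖ * (1/j)) := by
          apply mul_le_mul_of_nonneg_left _ (by positivity)
          exact mul_le_mul_of_nonneg_left hLub (norm_nonneg s)
      _ = ‖s‖ ^2 / ((j:ℝ) * j) := by ring
      _ = ‖s‖ ^2 / j^2 := by rw [← sq]
  have h3 : ‖(1 + s/j) * E‖ ≤ 2 * (‖s‖ ^2 / j^2) := by
    rw [norm_mul]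
    have hb : ‖1 + s/j‖ ≤ 2 := by
      calc ‖1 + s/j‖ ≤ ‖(1:ℂ)‖ + ‖s/j‖ := norm_add_le _ _
        _ ≤ 1 + 1 := by
            refine _root_.add_le_add (le_of_eq norm_one) ?_
            rw [norm_div, habsj, div_le_one hj0]
            exact hsj
        _ = 2 := by norm_num
    exact mul_le_mul hb hEbound (norm_nonneg _) (by norm_num)
  calc ‖rr s j - 1‖
      ≤ ‖s * ((((1:ℝ)/(j:ℝ) - L) : ℝ) : ℂ)‖ + ‖(s/j) * z‖
        + ‖(1 + s/j) * E‖ := by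
        rw [hkey]
        exact le_trans (norm_add_le _ _)
          (add_le_add_left (norm_add_le _ _) _)
    _ ≤ ‖s‖ / j^2 + ‖s‖ ^2/j^2 + 2*(‖s‖^2/j^2) :=
        _root_.add_le_add (_root_.add_le_add h1 h2) h3
    _ = (‖s‖ + 3 * ‖s‖ ^ 2) / (j:ℝ) ^ 2 := by ring
    _ ≤ 3 * (‖s‖ + 1) ^ 2 / (j:ℝ) ^ 2 := by
        have h5 : (0:ℝ) ≤ ‖s‖ := norm_nonneg s
        exact div_le_div_of_nonneg_right (by nlinarith) (by positivity : (0:ℝ) ≤ (j:ℝ)^2)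

lemma L7_rec (s : ℂ) (hs : 0 < s.re) (n : ℕ) (hn : 1 ≤ n) :
    Gq s (n + 1) = Gq s n * rr s n := by
  have hne : s + (n:ℂ) ≠ 0 := by
    intro h
    have h0 : (s + (n:ℂ)).re = 0 := by rw [h]; simp
    simp only [Complex.add_re, Complex.natCast_re] at h0
    have h4 : (0:ℝ) ≤ (n:ℝ) := Nat.cast_nonneg n
    linarith
  have h1 : Complex.Gamma (s + ((n+1 : ℕ):ℂ)) = (s + n) * Complex.Gamma (s + n) := by
    have h : s + ((n+1:ℕ):ℂ) = (s + n) + 1 := by push_cast; ring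
    rw [h, Complex.Gamma_add_one _ hne]
  have h2 : Complex.Gamma (((n+1 : ℕ):ℂ)) = (n:ℂ) * Complex.Gamma n := by
    have h : ((n+1:ℕ):ℂ) = (n:ℂ) + 1 := by push_cast; ring
    rw [h, Complex.Gamma_add_one _ (Nat.cast_ne_zero.2 (by omega))]
  have h3 : Complex.exp (s * (Real.log (n+1:ℕ) : ℝ)) =
      Complex.exp (s * Real.log n)
        * Complex.exp (s * (((Real.log ((n:ℝ)+1) - Real.log n : ℝ)) : ℂ)) := by
    rw [← Complex.exp_add]
    congr 1
    have : ((n+1:ℕ):ℝ) = (n:ℝ) + 1 := by push_cast; ring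
    rw [this]
    push_cast
    ring
  have hGne : Complex.Gamma (n:ℂ) ≠ 0 := by
    rw [← Complex.ofReal_natCast, Complex.Gamma_ofReal]
    exact_mod_cast (Real.Gamma_pos_of_pos (by positivity : (0:ℝ) < n)).ne'
  have hexp1 : Complex.exp (s * Real.log n) ≠ 0 := Complex.exp_ne_zero _
  have hexp2 : Complex.exp (s * (((Real.log ((n:ℝ)+1) - Real.log n : ℝ)) : ℂ)) ≠ 0 :=
    Complex.exp_ne_zero _
  have hnne : (n:ℂ) ≠ 0 := Nat.cast_ne_zero.2 (by omega)
  rw [Gq, Gq, rr, h1, h2, h3, Complex.exp_neg]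
  field_simp
  ring



lemma L4'_Gq_bound (b M : ℝ)
    (hM : ∀ (n : ℕ) (x : ℝ), 2 ≤ n → 0 < x → x ≤ b → Real.Gamma (x + n) ≤ M * (Real.Gamma n * (n:ℝ) ^ x))
    (n : ℕ) (hn : 2 ≤ n) (s : ℂ) (hs : 0 < s.re) (hsb : s.re ≤ b) :
    ‖Gq s n‖ ≤ M := by
  have hn0 : (0:ℝ) < n := by positivity
  have hGn : 0 < Real.Gamma (n:ℝ) := Real.Gamma_pos_of_pos hn0
  have habsGn : ‖Complex.Gamma (n:ℂ)‖ = Real.Gamma n := by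
    rw [← Complex.ofReal_natCast, Complex.Gamma_ofReal, Complex.norm_real, Real.norm_eq_abs,
      abs_of_pos hGn]
  have habsexp : ‖Complex.exp (s * Real.log n)‖ = (n:ℝ) ^ s.re := by
    rw [Complex.norm_exp, Real.rpow_def_of_pos hn0]
    congr 1
    simp only [Complex.mul_re, Complex.ofReal_re, Complex.ofReal_im, mul_zero, sub_zero]
    ring
  have hnum : ‖Complex.Gamma (s + n)‖ ≤ M * (Real.Gamma n * (n:ℝ) ^ s.re) := by
    have hre : (s + (n:ℂ)).re = s.re + n := by simp
    have h1 : ‖Complex.Gamma (s + n)‖ ≤ Real.Gamma (s.re + n) := by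
      have := L1_abs_Gamma_le (s := s + n) (by rw [hre]; positivity)
      rwa [hre] at this
    exact h1.trans (hM n s.re hn hs hsb)
  rw [Gq, norm_div, norm_mul, habsGn, habsexp, div_le_iff₀ (by positivity)]
  exact hnum

lemma L8_telescope (b M : ℝ) (hM1 : 1 ≤ M)
    (hMb : ∀ (j : ℕ), 2 ≤ j → ∀ s : ℂ, 0 < s.re → s.re ≤ b → ‖Gq s j‖ ≤ M)
    (s : ℂ) (hs : 0 < s.re) (hsb : s.re ≤ b) (n : ℕ) (hn : 2 ≤ n)
    (hsn : ‖s‖ ≤ n) :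
    ∀ N : ℕ, n ≤ N → ‖Gq s N - Gq s n‖
      ≤ 3 * M * (‖s‖ + 1)^2 * (1/((n:ℝ)-1) - 1/((N:ℝ)-1)) := by
  set u : ℝ := (‖s‖ + 1)^2 with hu
  have hu0 : 0 ≤ u := by positivity
  intro N hN
  induction N, hN using Nat.le_induction with
  | base => simp
  | succ N hN ih =>
    have hN2 : 2 ≤ N := le_trans hn hN
    have hN2' : (2:ℝ) ≤ (N:ℝ) := by exact_mod_cast hN2
    have hsN : ‖s‖ ≤ N := le_trans hsn (by exact_mod_cast hN)
    have hstep : Gq s (N+1) - Gq s N = Gq s N * (rr s N - 1) := by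
      rw [L7_rec s hs N (by omega)]
      ring
    have h1 : ‖Gq s (N+1) - Gq s N‖ ≤ M * (3 * u / (N:ℝ)^2) := by
      rw [hstep, norm_mul]
      exact mul_le_mul (hMb N hN2 s hs hsb) (L6_rr_bound s N hN2 hsN)
        (norm_nonneg _) (by linarith)
    have htri : ‖Gq s (N+1) - Gq s n‖
        ≤ ‖Gq s (N+1) - Gq s N‖ + ‖Gq s N - Gq s n‖ := by
      have : Gq s (N+1) - Gq s n = (Gq s (N+1) - Gq s N) + (Gq s N - Gq s n) := by ring
      rw [this]
      exact norm_add_le _ _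
    have hcast : ((N+1 : ℕ):ℝ) - 1 = (N:ℝ) := by push_cast; ring
    have hfrac : M * (3 * u / (N:ℝ)^2) ≤ 3 * M * u * (1/((N:ℝ)-1) - 1/(N:ℝ)) := by
      have hNpos : (0:ℝ) < N := by linarith
      have hN1pos : (0:ℝ) < (N:ℝ) - 1 := by linarith
      have heq : 1/((N:ℝ)-1) - 1/(N:ℝ) = 1/((N:ℝ)*((N:ℝ)-1)) := by
        field_simp
        ring
      rw [heq]
      rw [div_eq_mul_inv, div_eq_mul_inv, mul_comm] 
      have h2 : ((N:ℝ)^2)⁻¹ ≤ ((N:ℝ)*((N:ℝ)-1))⁻¹ := by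
        apply inv_anti₀
        · nlinarith
        · nlinarith
      calc 3 * u * ((N:ℝ)^2)⁻¹ * M ≤ 3 * u * ((N:ℝ)*((N:ℝ)-1))⁻¹ * M := by
            apply mul_le_mul_of_nonneg_right _ (by linarith)
            apply mul_le_mul_of_nonneg_left h2 (by positivity)
        _ = 3 * M * u * (1 * ((N:ℝ)*((N:ℝ)-1))⁻¹) := by ring
    calc ‖Gq s (N+1) - Gq s n‖
        ≤ ‖Gq s (N+1) - Gq s N‖ + ‖Gq s N - Gq s n‖ := htri
      _ ≤ M * (3 * u / (N:ℝ)^2) + 3 * M * u * (1/((n:ℝ)-1) - 1/((N:ℝ)-1)) :=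
          _root_.add_le_add h1 ih
      _ ≤ 3 * M * u * (1/((N:ℝ)-1) - 1/(N:ℝ)) + 3 * M * u * (1/((n:ℝ)-1) - 1/((N:ℝ)-1)) :=
          _root_.add_le_add hfrac le_rfl
      _ = 3 * M * u * (1/((n:ℝ)-1) - 1/(N:ℝ)) := by ring
      _ = 3 * M * u * (1/((n:ℝ)-1) - 1/(((N+1:ℕ):ℝ)-1)) := by rw [hcast]

lemma L9_near (b M : ℝ) (hM1 : 1 ≤ M)
    (hMb : ∀ (j : ℕ), 2 ≤ j → ∀ s : ℂ, 0 < s.re → s.re ≤ b → ‖Gq s j‖ ≤ M)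
    (s : ℂ) (hs : 0 < s.re) (hsb : s.re ≤ b) (n : ℕ) (hn : 2 ≤ n)
    (hsn : ‖s‖ ≤ n) :
    ‖Gq s n - 1‖ ≤ 3 * M * (‖s‖ + 1)^2 / ((n:ℝ)-1) := by
  have hn1 : (0:ℝ) < (n:ℝ) - 1 := by
    have : (2:ℝ) ≤ n := by exact_mod_cast hn
    linarith
  have hlim1 : Tendsto (fun N : ℕ => ‖Gq s N - Gq s n‖) atTop
      (𝓝 (‖1 - Gq s n‖)) := by
    have := ((L5_tendsto s hs).sub (tendsto_const_nhds (x := Gq s n)))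
    exact (continuous_norm.tendsto _).comp this
  have hlim2 : Tendsto (fun N : ℕ => 3 * M * (‖s‖ + 1)^2 * (1/((n:ℝ)-1) - 1/((N:ℝ)-1)))
      atTop (𝓝 (3 * M * (‖s‖ + 1)^2 * (1/((n:ℝ)-1) - 0))) := by
    apply Tendsto.const_mul
    apply Tendsto.const_sub
    have h1 : Tendsto (fun N : ℕ => (N:ℝ) - 1) atTop atTop :=
      tendsto_atTop_add_const_right _ _ tendsto_natCast_atTop_atTop
    have := h1.inv_tendsto_atTop
    simpa [one_div, Pi.inv_def] using this
  have hle : ‖1 - Gq s n‖ ≤ 3 * M * (‖s‖ + 1)^2 * (1/((n:ℝ)-1) - 0) := by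
    apply le_of_tendsto_of_tendsto hlim1 hlim2
    filter_upwards [eventually_ge_atTop n] with N hN
    exact L8_telescope b M hM1 hMb s hs hsb n hn hsn N hN
  calc ‖Gq s n - 1‖ = ‖1 - Gq s n‖ := by
        rw [← neg_sub, norm_neg]
    _ ≤ 3 * M * (‖s‖ + 1)^2 * (1/((n:ℝ)-1) - 0) := hle
    _ = 3 * M * (‖s‖ + 1)^2 / ((n:ℝ)-1) := by ring




set_option maxHeartbeats 1000000 in
theorem gamma_ratio_asymptotic (a b : ℝ) (ha : 0 < a) (hab : a ≤ b) :
    ∃ C : ℝ, 0 < C ∧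
      ∀ k : ℕ, 3 ≤ k → ∀ s : ℂ, a ≤ s.re → s.re ≤ b →
        ‖Complex.Gamma (s + k - 1) / Complex.Gamma ((k : ℂ) - 1)
            - ((k : ℂ) - 1) ^ s‖
          ≤ C * (‖s‖ + 1) ^ 2 * ((k : ℝ) - 1) ^ s.re / k := by
  have hb : 0 < b := lt_of_lt_of_le ha hab
  obtain ⟨M, hM1, hM⟩ := L4_crude b hb
  have hMb : ∀ (j : ℕ), 2 ≤ j → ∀ s : ℂ, 0 < s.re → s.re ≤ b → ‖Gq s j‖ ≤ M :=
    fun j hj s hs hsb => L4'_Gq_bound b M hM j hj s hs hsb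
  refine ⟨10 * M, by linarith, ?_⟩
  intro k hk s hsa hsb
  have hs0 : 0 < s.re := lt_of_lt_of_le ha hsa
  set n : ℕ := k - 1 with hndef
  have hkn : k = n + 1 := by omega
  have hn2 : 2 ≤ n := by omega
  have hn0 : (0:ℝ) < n := by positivity
  have hn2' : (2:ℝ) ≤ n := by exact_mod_cast hn2
  have hk0 : (0:ℝ) < k := by positivity
  have hk3 : (3:ℝ) ≤ k := by exact_mod_cast hk
  have hc1 : (k:ℂ) - 1 = (n:ℂ) := by rw [hkn]; push_cast; ring
  have hc2 : s + (k:ℂ) - 1 = s + (n:ℂ) := by rw [hkn]; push_cast; ring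
  have hc3 : (k:ℝ) - 1 = (n:ℝ) := by rw [hkn]; push_cast; ring
  rw [hc1, hc2, hc3, Lcpow_nat n (by omega) s]
  set u : ℝ := (‖s‖ + 1)^2 with hu
  have hu0 : (0:ℝ) ≤ u := by positivity
  set T : ℝ := (n:ℝ) ^ s.re with hT
  have hT0 : (0:ℝ) ≤ T := Real.rpow_nonneg hn0.le _
  have hGne : Complex.Gamma (n:ℂ) ≠ 0 := by
    rw [← Complex.ofReal_natCast, Complex.Gamma_ofReal]
    exact_mod_cast (Real.Gamma_pos_of_pos hn0).ne'
  have hexpne : Complex.exp (s * Real.log n) ≠ 0 := Complex.exp_ne_zero _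
  have hfactor : Complex.Gamma (s + n) / Complex.Gamma (n:ℂ) - Complex.exp (s * Real.log n)
      = Complex.exp (s * Real.log n) * (Gq s n - 1) := by
    rw [Gq]
    field_simp
  have habsexp : ‖Complex.exp (s * Real.log n)‖ = T := by
    rw [Complex.norm_exp, hT, Real.rpow_def_of_pos hn0]
    congr 1
    simp only [Complex.mul_re, Complex.ofReal_re, Complex.ofReal_im, mul_zero, sub_zero]
    ring
  rw [hfactor, norm_mul, habsexp]
  have hmain : ‖Gq s n - 1‖ ≤ 10 * M * u / k := by
    rcases le_or_gt (‖s‖) (n:ℝ) with hcase | hcase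
    · have h9 := L9_near b M hM1 hMb s hs0 hsb n hn2 hcase
      have hfrac : 3 * M * u / ((n:ℝ) - 1) ≤ 10 * M * u / k := by
        rw [div_le_div_iff₀ (by linarith) hk0]
        have hnk : (n:ℝ) = (k:ℝ) - 1 := hc3.symm
        have key : 0 ≤ M * u * (7*(k:ℝ) - 20) :=
          mul_nonneg (mul_nonneg (by linarith) hu0) (by linarith)
        nlinarith [key]
      exact le_trans h9 hfrac
    · have hcrude : ‖Gq s n - 1‖ ≤ M + 1 := by
        calc ‖Gq s n - 1‖ ≤ ‖Gq s n‖ + ‖(-1 : ℂ)‖ := by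
              rw [sub_eq_add_neg]
              exact norm_add_le _ _
          _ ≤ M + 1 := by
              have := hMb n hn2 s hs0 hsb
              simp only [norm_neg, norm_one]
              linarith
      have hku : (k:ℝ)^2 ≤ u := by
        have hnk : (n:ℝ) = (k:ℝ) - 1 := hc3.symm
        have h1 : (k:ℝ) ≤ ‖s‖ + 1 := by linarith
        rw [hu]
        nlinarith [norm_nonneg s, hk3]
      have : M + 1 ≤ 10 * M * u / k := by
        rw [le_div_iff₀ hk0]
        have hMk : (0:ℝ) ≤ M * k := mul_nonneg (by linarith) hk0.le
        have h1 : (M+1)*(k:ℝ) ≤ 2*M*(k:ℝ) := by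
          nlinarith [mul_nonneg (sub_nonneg.2 hM1) hk0.le]
        have h2 : 2*M*(k:ℝ) ≤ 10*M*(k:ℝ)^2 := by
          nlinarith [mul_nonneg hMk (by linarith : (0:ℝ) ≤ (k:ℝ) - 1), hMk]
        have h3 : 10*M*(k:ℝ)^2 ≤ 10*M*u := by
          nlinarith [mul_nonneg (by linarith : (0:ℝ) ≤ 10*M) (sub_nonneg.2 hku)]
        linarith
      linarith
  calc T * ‖Gq s n - 1‖ ≤ T * (10 * M * u / k) :=
        mul_le_mul_of_nonneg_left hmain hT0
    _ = 10 * M * u * T / k := by ring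
end

section
/- Let F be a totally real number field of degree n with ring of integers 𝒪 and real embeddings σ_1,…,σ_n. There exists a constant C = C(F) such that for every nonzero η ∈ 𝒪 and every n-tuple x = (x_1,…,x_n) of reals with x_i ≥ 2 for all i, the number of elements η' ∈ 𝒪 generating the same ideal as η (i.e. (η') = (η)) and satisfying 0 < σ_i(η') ≤ x_i for all i is at most C · (1 + log ‖x‖)^{n−1}, where ‖x‖ = max_i x_i. -/
open NumberField Finset NumberField.Units NumberField.Units.dirichletUnitTheorem

lemma aux_repr_bound {ι κ : Type*} [Fintype ι] [Fintype κ] [DecidableEq ι]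
    (B : Module.Basis κ ℝ (ι → ℝ)) (M : ℝ) (y : ι → ℝ) (hy : ∀ i, |y i| ≤ M) (j : κ) :
    |B.repr y j| ≤ (∑ i, |B.repr (Pi.single i 1) j|) * M := by
  have hyy : y = ∑ i, y i • (Pi.single i 1 : ι → ℝ) := by
    ext k
    simp [Pi.single_apply]
  calc |B.repr y j| = |∑ i, y i * B.repr (Pi.single i 1) j| := by
        conv_lhs => rw [hyy, map_sum]
        simp
    _ ≤ ∑ i, |y i * B.repr (Pi.single i 1) j| := Finset.abs_sum_le_sum_abs _ _
    _ ≤ ∑ i, |B.repr (Pi.single i 1) j| * M := by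
        refine Finset.sum_le_sum fun i _ => ?_
        rw [abs_mul, mul_comm]
        exact mul_le_mul_of_nonneg_left (hy i) (abs_nonneg _)
    _ = (∑ i, |B.repr (Pi.single i 1) j|) * M := by rw [Finset.sum_mul]

lemma aux_count {S T : Type*} [Finite T] {r : ℕ} (lo hi : Fin r → ℤ)
    (hle : ∀ j, lo j ≤ hi j + 1)
    (f : S → T × (Fin r → ℤ)) (hf : Function.Injective f)
    (hmem : ∀ s j, (f s).2 j ∈ Finset.Icc (lo j) (hi j)) :
    (Nat.card S : ℝ) ≤ (Nat.card T : ℝ) * ∏ j, ((hi j : ℝ) - lo j + 1) := by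
  classical
  let g : S → T × (∀ j : Fin r, (Finset.Icc (lo j) (hi j) : Finset ℤ)) :=
    fun s => ((f s).1, fun j => ⟨(f s).2 j, hmem s j⟩)
  have hg : Function.Injective g := by
    intro s₁ s₂ h
    apply hf
    have h1 := congrArg Prod.fst h
    have h2 : (f s₁).2 = (f s₂).2 := by
      funext j
      exact congrArg Subtype.val (congrFun (congrArg Prod.snd h) j)
    exact Prod.ext h1 h2
  have hcard : Nat.card S ≤ Nat.card (T × (∀ j : Fin r, (Finset.Icc (lo j) (hi j) : Finset ℤ))) :=
    Nat.card_le_card_of_injective g hg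
  have heq : Nat.card (T × (∀ j : Fin r, (Finset.Icc (lo j) (hi j) : Finset ℤ)))
      = Nat.card T * ∏ j, (hi j + 1 - lo j).toNat := by
    rw [Nat.card_prod, Nat.card_pi]
    congr 1
    refine Finset.prod_congr rfl fun j _ => ?_
    rw [Nat.card_eq_finsetCard, Int.card_Icc]
  calc (Nat.card S : ℝ) ≤ ((Nat.card T * ∏ j, (hi j + 1 - lo j).toNat : ℕ) : ℝ) := by
        exact_mod_cast heq ▸ hcard
    _ = (Nat.card T : ℝ) * ∏ j, ((hi j + 1 - lo j).toNat : ℝ) := by push_cast; ring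
    _ ≤ (Nat.card T : ℝ) * ∏ j, ((hi j : ℝ) - lo j + 1) := by
        refine mul_le_mul_of_nonneg_left (Finset.prod_le_prod (fun j _ => by positivity)
          (fun j _ => ?_)) (Nat.cast_nonneg _)
        rw [← Int.cast_natCast (R := ℝ), Int.toNat_of_nonneg (by linarith [hle j])]
        push_cast
        linarith

set_option maxHeartbeats 1000000 in
theorem associates_in_box_count (F : Type) [Field F] [NumberField F]
    (n : ℕ) (hn : 0 < n)
    (σ : Fin n → (F →+* ℝ))
    (hσ : Function.Injective σ)
    (hdeg : Module.finrank ℚ F = n) :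
    ∃ C : ℝ, 0 < C ∧
      ∀ η : 𝓞 F, η ≠ 0 → ∀ x : Fin n → ℝ, (∀ i, 2 ≤ x i) →
        (Nat.card {η' : 𝓞 F // Ideal.span {η'} = Ideal.span {η} ∧
            ∀ i, 0 < σ i (algebraMap (𝓞 F) F η') ∧
              σ i (algebraMap (𝓞 F) F η') ≤ x i} : ℝ)
          ≤ C * (1 + Real.log (⨆ i, x i)) ^ (n - 1) := by
  classical
  -- Step 1: all complex embeddings are real, places correspond to the σ i
  set τ : Fin n → (F →+* ℂ) := fun i => Complex.ofRealHom.comp (σ i) with hτdef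
  have hτreal : ∀ i, ComplexEmbedding.IsReal (τ i) := by
    intro i
    rw [ComplexEmbedding.isReal_iff]
    ext y
    simp [ComplexEmbedding.conjugate, τ, Complex.conj_ofReal]
  have hτinj : Function.Injective τ := by
    intro i j h
    apply hσ
    ext y
    have := RingHom.congr_fun h y
    simpa [τ] using this
  have hcard : Fintype.card (F →+* ℂ) = n := by
    rw [NumberField.Embeddings.card F ℂ, hdeg]
  have hτsurj : Function.Surjective τ :=
    ((Fintype.bijective_iff_injective_and_card τ).mpr ⟨hτinj, by simp [hcard]⟩).2
  have hallreal : ∀ w : InfinitePlace F, w.IsReal := by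
    intro w
    rw [← InfinitePlace.mk_embedding w, InfinitePlace.isReal_mk_iff]
    obtain ⟨i, hi⟩ := hτsurj (InfinitePlace.embedding w)
    rw [← hi]; exact hτreal i
  have hmult : ∀ w : InfinitePlace F, w.mult = 1 := fun w => by
    rw [InfinitePlace.mult, if_pos (hallreal w)]
  have hcomplex0 : InfinitePlace.nrComplexPlaces F = 0 := by
    rw [InfinitePlace.nrComplexPlaces]
    rw [Fintype.card_eq_zero_iff]
    refine ⟨fun ⟨w, hw⟩ => ?_⟩
    exact (InfinitePlace.not_isReal_iff_isComplex.mpr hw) (hallreal w)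
  have hcardP : Fintype.card (InfinitePlace F) = n := by
    have h1 := InfinitePlace.card_add_two_mul_card_eq_rank F
    have h2 := InfinitePlace.card_eq_nrRealPlaces_add_nrComplexPlaces F
    rw [hcomplex0] at h1 h2
    rw [hdeg] at h1
    omega
  have hrank : Units.rank F = n - 1 := by rw [Units.rank, hcardP]
  set p : Fin n → InfinitePlace F := fun i => InfinitePlace.mk (τ i) with hpdef
  have hp : ∀ i (y : F), p i y = |σ i y| := by
    intro i y
    rw [hpdef]
    simp only [InfinitePlace.apply]
    simp [τ]
  have hpsurj : Function.Surjective p := by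
    have hpinj : Function.Injective p := by
      intro i j h
      apply hτinj
      rcases InfinitePlace.mk_eq_iff.mp h with h' | h'
      · exact h'
      · rw [ComplexEmbedding.isReal_iff.mp (hτreal i)] at h'; exact h'
    exact ((Fintype.bijective_iff_injective_and_card p).mpr ⟨hpinj, by simp [hcardP]⟩).2
  -- Step 2: the basis and the constant
  let B : Module.Basis (Fin (Units.rank F)) ℝ ({w : InfinitePlace F // w ≠ w₀} → ℝ) :=
    (Units.basisUnitLattice F).ofZLatticeBasis ℝ (Units.unitLattice F)
  set K0 : ℝ := ∑ j, ∑ w, |B.repr (Pi.single w 1) j| with hK0def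
  have hK0 : 0 ≤ K0 := Finset.sum_nonneg fun j _ => Finset.sum_nonneg fun w _ => abs_nonneg _
  have hK0j : ∀ j, (∑ w, |B.repr (Pi.single w 1) j|) ≤ K0 := by
    intro j
    exact Finset.single_le_sum (f := fun j => ∑ w, |B.repr (Pi.single w 1) j|)
      (fun j _ => Finset.sum_nonneg fun w _ => abs_nonneg _) (Finset.mem_univ j)
  have htorpos : 0 < (Nat.card (torsion F) : ℝ) := by
    exact_mod_cast Nat.card_pos
  refine ⟨(Nat.card (torsion F) : ℝ) * (2 * K0 * n + 2) ^ (n - 1), by positivity, ?_⟩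
  intro η hη x hx
  -- basic facts about X and L
  set X : ℝ := ⨆ i, x i with hXdef
  have hxle : ∀ i, x i ≤ X := fun i =>
    le_ciSup (Set.Finite.bddAbove (Set.finite_range x)) i
  have hX2 : 2 ≤ X := le_trans (hx ⟨0, hn⟩) (hxle ⟨0, hn⟩)
  have hX0 : 0 < X := by linarith
  set L : ℝ := Real.log X with hLdef
  have hL0 : 0 < L := Real.log_pos (by linarith)
  -- Step 3: set up intervals
  set c : {w : InfinitePlace F // w ≠ w₀} → ℝ :=
    fun w => - Real.log (w.1 (algebraMap (𝓞 F) F η)) with hcdef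
  set R : ℝ := K0 * (n * L) with hRdef
  have hR : 0 ≤ R := by positivity
  set lo : Fin (Units.rank F) → ℤ := fun j => ⌈B.repr c j - R⌉ with hlodef
  set hi : Fin (Units.rank F) → ℤ := fun j => ⌊B.repr c j + R⌋ with hhidef
  have hle : ∀ j, lo j ≤ hi j + 1 := by
    intro j
    have h1 : (⌈B.repr c j - R⌉ : ℤ) ≤ ⌈B.repr c j + R⌉ := Int.ceil_le_ceil (by linarith)
    have h2 := Int.ceil_le_floor_add_one (B.repr c j + R)
    simp only [hlodef, hhidef]
    omega
  -- Step 4: the key injection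
  have key : ∀ s : {η' : 𝓞 F // Ideal.span {η'} = Ideal.span {η} ∧
      ∀ i, 0 < σ i (algebraMap (𝓞 F) F η') ∧ σ i (algebraMap (𝓞 F) F η') ≤ x i},
      ∃ ζe : torsion F × (Fin (Units.rank F) → ℤ),
      ((s.1 : 𝓞 F) = η * ((ζe.1 : (𝓞 F)ˣ) * ∏ i, (fundSystem F i) ^ (ζe.2 i)) ∧
       ∀ j, ζe.2 j ∈ Finset.Icc (lo j) (hi j)) := by
    rintro ⟨η', hspan, hbox⟩
    obtain ⟨u, hu⟩ := Ideal.span_singleton_eq_span_singleton.mp hspan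
    have hη' : η' = η * ((u⁻¹ : (𝓞 F)ˣ) : 𝓞 F) := by
      rw [← hu, mul_assoc]
      simp
    obtain ⟨⟨ζ, e⟩, hdecomp, -⟩ := Units.exist_unique_eq_mul_prod F u⁻¹
    refine ⟨(ζ, e), ?_, ?_⟩
    · show η' = η * _
      rw [hη', hdecomp, Units.val_mul]
    -- now the bounds
    have hη'0 : η' ≠ 0 := by
      intro h0
      have h1 := (hbox ⟨0, hn⟩).1
      rw [h0] at h1
      simp at h1
    have hwpos : ∀ w : InfinitePlace F, 0 < w (algebraMap (𝓞 F) F η') := by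
      intro w
      obtain ⟨i, rfl⟩ := hpsurj w
      rw [hp]
      exact abs_pos.mpr (ne_of_gt (hbox i).1)
    have hwle : ∀ w : InfinitePlace F, w (algebraMap (𝓞 F) F η') ≤ X := by
      intro w
      obtain ⟨i, rfl⟩ := hpsurj w
      rw [hp, abs_of_pos (hbox i).1]
      exact le_trans (hbox i).2 (hxle i)
    have hprodnorm : (1:ℝ) ≤ ∏ w : InfinitePlace F, w (algebraMap (𝓞 F) F η') := by
      have hpe := InfinitePlace.prod_eq_abs_norm (algebraMap (𝓞 F) F η')
      simp only [hmult, pow_one] at hpe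
      rw [hpe, ← Algebra.coe_norm_int, ← Int.cast_one, ← Int.cast_abs, Rat.cast_intCast,
        Int.cast_le]
      exact Int.one_le_abs (Algebra.norm_ne_zero_iff.mpr hη'0)
    have hwlow : ∀ w : InfinitePlace F, 1 ≤ w (algebraMap (𝓞 F) F η') * X ^ (n-1) := by
      intro w
      calc (1:ℝ) ≤ ∏ w' : InfinitePlace F, w' (algebraMap (𝓞 F) F η') := hprodnorm
      _ = w (algebraMap (𝓞 F) F η') * ∏ w' ∈ (univ : Finset (InfinitePlace F)).erase w, w' (algebraMap (𝓞 F) F η') :=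
          (Finset.mul_prod_erase univ (fun w' => w' (algebraMap (𝓞 F) F η')) (mem_univ w)).symm
      _ ≤ w (algebraMap (𝓞 F) F η') * X ^ (n-1) := by
          refine mul_le_mul_of_nonneg_left ?_ (le_of_lt (hwpos w))
          calc ∏ w' ∈ (univ : Finset (InfinitePlace F)).erase w, w' (algebraMap (𝓞 F) F η')
              ≤ ∏ w' ∈ (univ : Finset (InfinitePlace F)).erase w, X :=
            Finset.prod_le_prod (fun w' _ => (hwpos w').le) (fun w' _ => hwle w')
          _ = X ^ (n-1) := by
            rw [Finset.prod_const, Finset.card_erase_of_mem (mem_univ w), Finset.card_univ,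
              hcardP]
    have hlog : ∀ w : InfinitePlace F, |Real.log (w (algebraMap (𝓞 F) F η'))| ≤ n * L := by
      intro w
      have hn1 : ((n-1 : ℕ) : ℝ) * L ≤ n * L := by
        refine mul_le_mul_of_nonneg_right ?_ hL0.le
        exact_mod_cast Nat.sub_le n 1
      rw [abs_le]
      constructor
      · have h1 : (0:ℝ) ≤ Real.log (w (algebraMap (𝓞 F) F η') * X ^ (n-1)) :=
          Real.log_nonneg (hwlow w)
        rw [Real.log_mul (ne_of_gt (hwpos w)) (by positivity), Real.log_pow] at h1
        linarith
      · have h2 : Real.log (w (algebraMap (𝓞 F) F η')) ≤ L :=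
          Real.log_le_log (hwpos w) (hwle w)
        have h3 : L ≤ n * L := le_mul_of_one_le_left hL0.le (by exact_mod_cast hn)
        linarith
    -- the log embedding of u⁻¹
    have hwη : ∀ w : InfinitePlace F, 0 < w (algebraMap (𝓞 F) F η) := by
      intro w
      exact (InfinitePlace.pos_iff).mpr (RingOfIntegers.coe_ne_zero_iff.mpr hη)
    have hcoord : ∀ w : {w : InfinitePlace F // w ≠ w₀},
        logEmbedding F (Additive.ofMul u⁻¹) w =
          Real.log (w.1 (algebraMap (𝓞 F) F η')) + c w := by
      intro w
      rw [logEmbedding_component, hmult w.1, Nat.cast_one, one_mul]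
      have hval : w.1 ((u⁻¹ : (𝓞 F)ˣ) : F) =
          w.1 (algebraMap (𝓞 F) F η') / w.1 (algebraMap (𝓞 F) F η) := by
        rw [eq_div_iff (ne_of_gt (hwη w.1))]
        rw [← map_mul]
        congr 1
        rw [hη']
        push_cast
        ring
      rw [hval, Real.log_div (ne_of_gt (hwpos w.1)) (ne_of_gt (hwη w.1)), hcdef]
      ring
    -- identify the exponents via the basis
    have hlogdecomp : logEmbedding F (Additive.ofMul u⁻¹) = ∑ i, (e i : ℝ) • B i := by
      rw [hdecomp]
      have hofmul : Additive.ofMul (↑((ζ : (𝓞 F)ˣ) * ∏ i, fundSystem F i ^ e i) : (𝓞 F)ˣ)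
          = Additive.ofMul (ζ : (𝓞 F)ˣ) + ∑ i, e i • Additive.ofMul (fundSystem F i) := by
        rw [ofMul_mul, ofMul_prod]
        simp_rw [ofMul_zpow]
      rw [hofmul, map_add, map_sum, (logEmbedding_eq_zero_iff).mpr ζ.2, zero_add]
      refine Finset.sum_congr rfl fun i _ => ?_
      rw [map_zsmul, logEmbedding_fundSystem, ← Module.Basis.ofZLatticeBasis_apply ℝ,
        Int.cast_smul_eq_zsmul]
    have hrepr : ∀ j, B.repr (logEmbedding F (Additive.ofMul u⁻¹)) j = (e j : ℝ) := by
      intro j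
      rw [hlogdecomp]
      rw [B.repr_sum_self]
    -- bound the exponents
    intro j
    have hyw : ∀ w, |(logEmbedding F (Additive.ofMul u⁻¹) - c) w| ≤ n * L := by
      intro w
      rw [Pi.sub_apply, hcoord w, add_sub_cancel_right]
      exact hlog w.1
    have hBj : |(e j : ℝ) - B.repr c j| ≤ R := by
      have heq : (e j : ℝ) - B.repr c j = B.repr (logEmbedding F (Additive.ofMul u⁻¹) - c) j := by
        rw [map_sub, Finsupp.coe_sub, Pi.sub_apply, hrepr j]
      rw [heq, hRdef]
      exact le_trans (aux_repr_bound B (n*L) _ hyw j)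
        (mul_le_mul_of_nonneg_right (hK0j j) (by positivity))
    rw [Finset.mem_Icc]
    obtain ⟨hb1, hb2⟩ := abs_le.mp hBj
    constructor
    · rw [hlodef, Int.ceil_le]
      push_cast
      linarith
    · rw [hhidef, Int.le_floor]
      push_cast
      linarith
  choose f hf using key
  have hfinj : Function.Injective f := by
    intro s₁ s₂ h
    apply Subtype.ext
    rw [(hf s₁).1, (hf s₂).1, h]
  have count := aux_count lo hi hle f hfinj (fun s => (hf s).2)
  refine le_trans count ?_
  have hn1 : (1:ℝ) ≤ n := by exact_mod_cast hn
  have hfac : ∀ j, ((hi j : ℝ) - lo j + 1) ≤ (2*K0*n + 2) * (1 + L) := by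
    intro j
    have h1 : (hi j : ℝ) ≤ B.repr c j + R := Int.floor_le _
    have h2 : B.repr c j - R ≤ (lo j : ℝ) := Int.le_ceil _
    have h3 : (hi j : ℝ) - lo j + 1 ≤ 2*R + 1 := by linarith
    refine le_trans h3 ?_
    rw [hRdef]
    nlinarith [mul_nonneg hK0 (le_trans zero_le_one hn1), hL0.le,
      mul_nonneg (mul_nonneg hK0 (le_trans zero_le_one hn1)) hL0.le]
  calc (Nat.card (torsion F) : ℝ) * ∏ j, ((hi j : ℝ) - lo j + 1)
      ≤ (Nat.card (torsion F) : ℝ) * ∏ _j : Fin (Units.rank F), ((2*K0*n + 2) * (1 + L)) := by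
        refine mul_le_mul_of_nonneg_left (Finset.prod_le_prod (fun j _ => ?_)
          (fun j _ => hfac j)) (Nat.cast_nonneg _)
        have := hle j
        have : (lo j : ℝ) ≤ (hi j : ℝ) + 1 := by exact_mod_cast this
        linarith
    _ = (Nat.card (torsion F) : ℝ) * (2 * K0 * n + 2) ^ (n-1) * (1 + L) ^ (n-1) := by
        rw [Finset.prod_const, Finset.card_univ, Fintype.card_fin, hrank, mul_pow]
        ring
end
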